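/- Let G be a finitely generated group admitting a family 𝒮 of finite symmetric generating systems with Property (★). Then every element of G of finite order has order 1, 2, 3, 4, or 6 (equivalently, every torsion element x satisfies: the order n of x has Euler totient φ(n) ≤ 2). -/

import Mathlib

/-! Common definitions: word metrics, quasi-isometries, rough isometries. -/

/-- `g` is a product of `n` elements of `S ∪ S⁻¹`. -/
def IsWordProd {G : Type*} [Group G] (S : Set G) (g : G) (n : ℕ) : Prop :=
  ∃ l : List G, l.length = n ∧ (∀ s ∈ l, s ∈ S ∪ S⁻¹) ∧ l.prod = g

/-- The word metric associated to a generating system `S`: the least `n` such that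
`x⁻¹ * y` is a product of `n` elements of `S ∪ S⁻¹`. -/
noncomputable def wdist {G : Type*} [Group G] (S : Set G) (x y : G) : ℕ :=
  sInf {n | IsWordProd S (x⁻¹ * y) n}

/-- The word norm `‖g‖_S = d_S(e, g)`. -/
noncomputable def wnorm {G : Type*} [Group G] (S : Set G) (g : G) : ℕ :=
  wdist S 1 g

/-- `(η, η')` is a `(lam, eps)`-quasi-isometry between `(X, dX)` and `(Y, dY)`. -/
def IsQIPair {X Y : Type*} (dX : X → X → ℝ) (dY : Y → Y → ℝ)
    (η : X → Y) (η' : Y → X) (lam eps : ℝ) : Prop :=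
  (∀ x x' : X, lam⁻¹ * dX x x' - eps ≤ dY (η x) (η x') ∧
      dY (η x) (η x') ≤ lam * dX x x' + eps) ∧
  (∀ y y' : Y, lam⁻¹ * dY y y' - eps ≤ dX (η' y) (η' y') ∧
      dX (η' y) (η' y') ≤ lam * dY y y' + eps) ∧
  (∀ y : Y, dY (η (η' y)) y ≤ eps) ∧
  (∀ x : X, dX (η' (η x)) x ≤ eps)

/-- `(η, η')` is an `eps`-isometry between `(X, dX)` and `(Y, dY)`. -/
def IsEpsIsomPair {X Y : Type*} (dX : X → X → ℝ) (dY : Y → Y → ℝ)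
    (η : X → Y) (η' : Y → X) (eps : ℝ) : Prop :=
  (∀ x x' : X, |dX x x' - dY (η x) (η x')| ≤ eps) ∧
  (∀ y y' : Y, |dY y y' - dX (η' y) (η' y')| ≤ eps) ∧
  (∀ y : Y, dY (η (η' y)) y ≤ eps) ∧
  (∀ x : X, dX (η' (η x)) x ≤ eps)

/-- The real-valued word metric. -/
noncomputable def wdistR {G : Type*} [Group G] (S : Set G) (x y : G) : ℝ :=
  (wdist S x y : ℝ)

/-- Property (★): for all `g ≠ h`, `g ≠ h⁻¹` and every positive `R` there is `S ∈ 𝒮`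
containing one of `g`, `h` while the other has word norm at least `R`. -/
def PropertyStar {G : Type*} [Group G] (𝒮 : Set (Set G)) : Prop :=
  ∀ g h : G, g ≠ h → g ≠ h⁻¹ → ∀ R : ℕ, 0 < R →
    ∃ S ∈ 𝒮, (g ∈ S ∧ R ≤ wnorm S h) ∨ (h ∈ S ∧ R ≤ wnorm S g)

/-- `φ` is an `𝒮`-uniform quasi-isometry of `G`: for some fixed `λ, ε ≥ 0` and some
`φ'`, the pair `(φ, φ')` is a `(λ, ε)`-quasi-isometry of `(G, d_S)` for every `S ∈ 𝒮`. -/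
def UniformQI {G : Type*} [Group G] (𝒮 : Set (Set G)) (φ : G → G) : Prop :=
  ∃ lam eps : ℝ, 0 ≤ lam ∧ 0 ≤ eps ∧ ∃ φ' : G → G,
    ∀ S ∈ 𝒮, IsQIPair (wdistR S) (wdistR S) φ φ' lam eps


/-- Arithmetic: positive `n` with `φ n ≤ 2` lies in `{1,2,3,4,6}`. -/
lemma totient_le_two_mem (n : ℕ) (hn : 0 < n) (h : n.totient ≤ 2) :
    n ∈ ({1, 2, 3, 4, 6} : Set ℕ) := by
  have h5 : ¬ (5 ∣ n) := by
    intro hd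
    have := Nat.totient_dvd_of_dvd hd
    have h5t : Nat.totient 5 = 4 := by decide
    rw [h5t] at this
    have := Nat.le_of_dvd (Nat.totient_pos.2 hn) this
    omega
  have hcop : Nat.Coprime 5 n := (Nat.Prime.coprime_iff_not_dvd (by norm_num)).2 h5
  have hpow : 5 ^ n.totient ≡ 1 [MOD n] := Nat.ModEq.pow_totient hcop
  have htpos : 0 < n.totient := Nat.totient_pos.2 hn
  have hdvd : n ∣ 24 := by
    interval_cases ht : n.totient
    · rcases Nat.totient_eq_one_iff.mp ht with rfl | rfl <;> norm_num
    · have : (1 : ℕ) ≡ 25 [MOD n] := by simpa using hpow.symm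
      have := (Nat.modEq_iff_dvd' (by norm_num)).1 this
      simpa using this
  have hle : n ≤ 24 := Nat.le_of_dvd (by norm_num) hdvd
  interval_cases n <;> simp_all <;> exact absurd h (by decide)

/-- Word norm bound: a power of a generator costs at most the exponent. -/
lemma wnorm_pow_le' {G : Type*} [Group G] {S : Set G} {s : G} (hs : s ∈ S) (k : ℕ) :
    wnorm S (s ^ k) ≤ k := by
  apply Nat.sInf_le
  refine ⟨List.replicate k s, List.length_replicate, ?_, ?_⟩
  · intro t ht
    rw [List.eq_of_mem_replicate ht]
    exact Or.inl hs
  · simp [List.prod_replicate]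

/-- If `G` admits a family of finite symmetric generating systems with
Property (★), then every torsion element of `G` has order 1, 2, 3, 4 or 6; equivalently
its order has Euler totient at most 2. -/
theorem property_star_restricts_torsion {G : Type*} [Group G] [Group.FG G]
    (𝒮 : Set (Set G))
    (h𝒮 : ∀ S ∈ 𝒮, S.Finite ∧ S⁻¹ = S ∧ Subgroup.closure S = ⊤)
    (hstar : PropertyStar 𝒮) :
    ∀ x : G, IsOfFinOrder x →
      (orderOf x).totient ≤ 2 ∧ orderOf x ∈ ({1, 2, 3, 4, 6} : Set ℕ) := by
  intro x hx
  set n := orderOf x with hn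
  have hnpos : 0 < n := hx.orderOf_pos
  suffices ht : n.totient ≤ 2 by
    exact ⟨ht, totient_le_two_mem n hnpos ht⟩
  by_contra ht
  push_neg at ht
  haveI : NeZero n := ⟨hnpos.ne'⟩
  -- find a unit of `ZMod n` different from `1` and `-1`
  obtain ⟨u, hu1, hum1⟩ : ∃ u : (ZMod n)ˣ, u ≠ 1 ∧ u ≠ -1 := by
    by_contra hcon
    push_neg at hcon
    have hsub : (Finset.univ : Finset (ZMod n)ˣ) ⊆ {1, -1} := by
      intro u _
      by_cases h : u = 1
      · simp [h]
      · simp [hcon u h]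
    have hcard : Fintype.card (ZMod n)ˣ ≤ 2 :=
      le_trans (Finset.card_le_card hsub)
        (le_trans (Finset.card_insert_le _ _) (by simp))
    rw [ZMod.card_units_eq_totient] at hcard
    omega
  set a : ℕ := (u : ZMod n).val with ha
  set b : ℕ := ((u⁻¹ : (ZMod n)ˣ) : ZMod n).val with hb
  have hacast : ((a : ℕ) : ZMod n) = (u : ZMod n) :=
    (ZMod.natCast_val _).trans (ZMod.cast_id _ _)
  have hbcast : ((b : ℕ) : ZMod n) = ((u⁻¹ : (ZMod n)ˣ) : ZMod n) :=
    (ZMod.natCast_val _).trans (ZMod.cast_id _ _)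
  have halt : a < n := ZMod.val_lt _
  have hblt : b < n := ZMod.val_lt _
  set g : G := x ^ a with hg
  -- g ≠ x
  have hgx : g ≠ x := by
    intro h
    have : x ^ a = x ^ 1 := by simpa using h
    have hmod : a ≡ 1 [MOD n] := pow_eq_pow_iff_modEq.mp this
    have : ((a : ℕ) : ZMod n) = ((1 : ℕ) : ZMod n) :=
      (ZMod.natCast_eq_natCast_iff _ _ _).mpr hmod
    rw [hacast] at this
    exact hu1 (Units.ext (by simpa using this))
  -- g ≠ x⁻¹
  have hgxinv : g ≠ x⁻¹ := by
    intro h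
    have hx1 : x ^ (n - 1) = x⁻¹ := by
      apply eq_inv_of_mul_eq_one_left
      rw [← pow_succ]
      have : n - 1 + 1 = n := by omega
      rw [this]
      exact pow_orderOf_eq_one x
    have : x ^ a = x ^ (n - 1) := by rw [hx1]; exact h
    have hmod : a ≡ n - 1 [MOD n] := pow_eq_pow_iff_modEq.mp this
    have hcasteq : ((a : ℕ) : ZMod n) = ((n - 1 : ℕ) : ZMod n) :=
      (ZMod.natCast_eq_natCast_iff _ _ _).mpr hmod
    have hneg : ((n - 1 : ℕ) : ZMod n) = -1 := by
      have h1n : (1 : ℕ) ≤ n := hnpos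
      push_cast [Nat.cast_sub h1n]
      simp
    rw [hacast, hneg] at hcasteq
    exact hum1 (Units.ext (by simpa using hcasteq))
  -- x = g ^ b
  have hxg : g ^ b = x := by
    rw [hg, ← pow_mul]
    have hmod : a * b ≡ 1 [MOD n] := by
      apply (ZMod.natCast_eq_natCast_iff _ _ _).mp
      push_cast
      rw [hacast, hbcast]
      simp
    have : x ^ (a * b) = x ^ 1 := pow_eq_pow_iff_modEq.mpr hmod
    simpa using this
  -- apply Property (★) with R = n
  obtain ⟨S, hS, hcase⟩ := hstar g x hgx hgxinv n hnpos
  rcases hcase with ⟨hgS, hle⟩ | ⟨hxS, hle⟩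
  · have : wnorm S x ≤ b := by rw [← hxg]; exact wnorm_pow_le' hgS b
    omega
  · have : wnorm S g ≤ a := by rw [hg]; exact wnorm_pow_le' hxS a
    omega
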